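/- arXiv:2001.11668 — 3 statements merged into one kernel-verified Lean document; each statement's English description precedes it below -/
import Mathlib

section
/- Let f : 𝕊^n → ℝ be convex and differentiable, and let X* be a minimizer of f over the spectrahedron S_n with eigendecomposition X* = Σ_{i=1}^r λ_i v_i v_iᵀ where λ_i > 0 for all i ∈ [r]. Then each v_i (i ∈ [r]) is an eigenvector of ∇f(X*) corresponding to its smallest eigenvalue λ_n(∇f(X*)); equivalently, {v_i}_{i=1}^r are top eigenvectors of −∇f(X*) corresponding to λ_1(−∇f(X*)) = −λ_n(∇f(X*)). -/
open scoped BigOperators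
open MeasureTheory
open scoped Matrix

namespace LRSGD

noncomputable def frobInner {n : ℕ} (A B : Matrix (Fin n) (Fin n) ℝ) : ℝ :=
  Matrix.trace (A * Bᵀ)

noncomputable def frobNorm {n : ℕ} (A : Matrix (Fin n) (Fin n) ℝ) : ℝ :=
  Real.sqrt (∑ i, ∑ j, (A i j) ^ 2)

noncomputable def specNorm {n : ℕ} (A : Matrix (Fin n) (Fin n) ℝ) : ℝ :=
  sSup {s : ℝ | ∃ u : Fin n → ℝ, (∑ k, u k ^ 2) = 1 ∧
    s = Real.sqrt (∑ i, (A.mulVec u i) ^ 2)}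

def spectrahedron (n : ℕ) : Set (Matrix (Fin n) (Fin n) ℝ) :=
  {X | X.PosSemidef ∧ X.trace = 1}

def IsProjOn {n : ℕ} (S : Set (Matrix (Fin n) (Fin n) ℝ))
    (M P : Matrix (Fin n) (Fin n) ℝ) : Prop :=
  P ∈ S ∧ ∀ Z ∈ S, frobNorm (M - P) ≤ frobNorm (M - Z)

def IsEigenDecomp {n : ℕ} (M : Matrix (Fin n) (Fin n) ℝ)
    (lam : Fin n → ℝ) (v : Fin n → Fin n → ℝ) : Prop :=
  Antitone lam ∧
  (∀ i j, (∑ k, v i k * v j k) = if i = j then (1 : ℝ) else 0) ∧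
  M = ∑ i, lam i • Matrix.vecMulVec (v i) (v i)

def IsGradient {n : ℕ} (f : Matrix (Fin n) (Fin n) ℝ → ℝ)
    (g : Matrix (Fin n) (Fin n) ℝ → Matrix (Fin n) (Fin n) ℝ) : Prop :=
  ∀ X H : Matrix (Fin n) (Fin n) ℝ,
    HasDerivAt (fun t : ℝ => f (X + t • H)) (frobInner (g X) H) 0

def IsMinimizerOn {n : ℕ} (f : Matrix (Fin n) (Fin n) ℝ → ℝ)
    (S : Set (Matrix (Fin n) (Fin n) ℝ)) (Xs : Matrix (Fin n) (Fin n) ℝ) : Prop :=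
  Xs ∈ S ∧ ∀ Y ∈ S, f Xs ≤ f Y

/-! ### Auxiliary lemmas -/

/-- Derivative nonneg at a one-sided minimum. -/
lemma aux_deriv_nonneg_of_min (φ : ℝ → ℝ) (d : ℝ) (hd : HasDerivAt φ d 0)
    (hmin : ∀ t ∈ Set.Ioc (0:ℝ) 1, φ 0 ≤ φ t) : 0 ≤ d := by
  have hslope := hasDerivAt_iff_tendsto_slope.mp hd
  have h1 : Filter.Tendsto (slope φ 0) (nhdsWithin 0 (Set.Ioi (0:ℝ))) (nhds d) :=
    hslope.mono_left (nhdsWithin_mono _ (fun x hx => ne_of_gt hx))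
  refine ge_of_tendsto h1 ?_
  filter_upwards [Ioc_mem_nhdsGT_of_mem (Set.left_mem_Ico.mpr one_pos),
    self_mem_nhdsWithin] with t ht ht'
  have : (0:ℝ) ≤ φ t - φ 0 := sub_nonneg.mpr (hmin t ht)
  have h0 : (0:ℝ) < t := ht'
  rw [slope_def_field, div_nonneg_iff]
  left
  exact ⟨by linarith, by linarith⟩

lemma aux_frobInner_eq {n : ℕ} (A M : Matrix (Fin n) (Fin n) ℝ) :
    frobInner A M = ∑ i, ∑ j, A i j * M i j := by
  unfold frobInner
  rw [Matrix.trace]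
  simp [Matrix.mul_apply, Matrix.diag]

lemma aux_frobInner_vecMulVec {n : ℕ} (A : Matrix (Fin n) (Fin n) ℝ) (a : Fin n → ℝ) :
    frobInner A (Matrix.vecMulVec a a) = a ⬝ᵥ (A *ᵥ a) := by
  rw [aux_frobInner_eq]
  simp only [Matrix.vecMulVec_apply, dotProduct, Matrix.mulVec, dotProduct,
    Finset.mul_sum]
  exact Finset.sum_congr rfl fun i _ => Finset.sum_congr rfl fun j _ => by ring

lemma aux_vecMulVec_psd {n : ℕ} (a : Fin n → ℝ) : (Matrix.vecMulVec a a).PosSemidef := by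
  refine Matrix.PosSemidef.of_dotProduct_mulVec_nonneg ?_ ?_
  · ext i j
    simp [Matrix.vecMulVec_apply, Matrix.conjTranspose, mul_comm]
  · intro x
    have : Matrix.vecMulVec a a *ᵥ x = (a ⬝ᵥ x) • a := by
      funext k
      simp only [Matrix.mulVec, Matrix.vecMulVec_apply, dotProduct, Pi.smul_apply,
        smul_eq_mul, Finset.sum_mul]
      exact Finset.sum_congr rfl fun j _ => by ring
    rw [this]
    simp only [star_trivial, dotProduct_smul]
    have : a ⬝ᵥ x = x ⬝ᵥ a := dotProduct_comm _ _
    rw [smul_eq_mul, ← this]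
    exact mul_self_nonneg _

lemma aux_psd_add {n : ℕ} {A B : Matrix (Fin n) (Fin n) ℝ}
    (hA : A.PosSemidef) (hB : B.PosSemidef) : (A + B).PosSemidef := by
  refine Matrix.PosSemidef.of_dotProduct_mulVec_nonneg (hA.1.add hB.1) fun x => ?_
  rw [Matrix.add_mulVec, dotProduct_add]
  exact add_nonneg (hA.dotProduct_mulVec_nonneg x) (hB.dotProduct_mulVec_nonneg x)

lemma aux_psd_smul {n : ℕ} {A : Matrix (Fin n) (Fin n) ℝ} {c : ℝ}
    (hA : A.PosSemidef) (hc : 0 ≤ c) : (c • A).PosSemidef := by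
  refine Matrix.PosSemidef.of_dotProduct_mulVec_nonneg ?_ ?_
  · show (c • A)ᴴ = c • A
    rw [Matrix.conjTranspose_smul, star_trivial, hA.1]
  · intro x
    rw [Matrix.smul_mulVec, dotProduct_smul, smul_eq_mul]
    exact mul_nonneg hc (hA.dotProduct_mulVec_nonneg x)

lemma aux_col_orth {n : ℕ} (w : Fin n → Fin n → ℝ)
    (horthw : ∀ i j, (∑ k, w i k * w j k) = if i = j then (1 : ℝ) else 0) :
    ∀ k l, ∑ j, w j k * w j l = if k = l then (1:ℝ) else 0 := by
  have hWWt : (Matrix.of w) * (Matrix.of w)ᵀ = 1 := by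
    ext i j
    simp [Matrix.mul_apply, Matrix.one_apply, horthw i j]
  have hWtW : (Matrix.of w)ᵀ * (Matrix.of w) = 1 := mul_eq_one_comm.mp hWWt
  intro k l
  have := congrFun (congrFun hWtW k) l
  simpa [Matrix.mul_apply, Matrix.one_apply] using this

lemma aux_expand {n : ℕ} (w : Fin n → Fin n → ℝ)
    (horthw : ∀ i j, (∑ k, w i k * w j k) = if i = j then (1 : ℝ) else 0)
    (u : Fin n → ℝ) (k : Fin n) : ∑ j, (w j ⬝ᵥ u) * w j k = u k := by
  have hcol := aux_col_orth w horthw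
  calc ∑ j, (w j ⬝ᵥ u) * w j k = ∑ j, ∑ l, u l * (w j l * w j k) := by
        refine Finset.sum_congr rfl fun j _ => ?_
        simp [dotProduct, Finset.sum_mul]
        exact Finset.sum_congr rfl fun l _ => by ring
    _ = ∑ l, u l * ∑ j, w j l * w j k := by
        rw [Finset.sum_comm]
        exact Finset.sum_congr rfl fun l _ => by rw [Finset.mul_sum]
    _ = u k := by
        simp [hcol]

lemma aux_mulVec_decomp {n : ℕ} (mu : Fin n → ℝ) (w : Fin n → Fin n → ℝ)
    (u : Fin n → ℝ) (k : Fin n) :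
    ((∑ j, mu j • Matrix.vecMulVec (w j) (w j)) *ᵥ u) k = ∑ j, mu j * (w j ⬝ᵥ u) * w j k := by
  simp only [Matrix.mulVec, dotProduct, Matrix.sum_apply, Pi.smul_apply, smul_eq_mul,
    Matrix.smul_apply, Matrix.vecMulVec_apply, Finset.sum_mul]
  rw [Finset.sum_comm]
  refine Finset.sum_congr rfl fun j _ => ?_
  rw [Finset.mul_sum, Finset.sum_mul]
  exact Finset.sum_congr rfl fun l _ => by ring

lemma aux_quad_decomp {n : ℕ} (mu : Fin n → ℝ) (w : Fin n → Fin n → ℝ) (u : Fin n → ℝ) :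
    u ⬝ᵥ ((∑ j, mu j • Matrix.vecMulVec (w j) (w j)) *ᵥ u) = ∑ j, mu j * (w j ⬝ᵥ u)^2 := by
  simp only [dotProduct]
  calc ∑ k, u k * ((∑ j, mu j • Matrix.vecMulVec (w j) (w j)) *ᵥ u) k
      = ∑ k, ∑ j, mu j * (w j ⬝ᵥ u) * (w j k * u k) := by
        refine Finset.sum_congr rfl fun k _ => ?_
        rw [aux_mulVec_decomp, Finset.mul_sum]
        exact Finset.sum_congr rfl fun j _ => by ring
    _ = ∑ j, mu j * (w j ⬝ᵥ u) * ∑ k, w j k * u k := by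
        rw [Finset.sum_comm]
        exact Finset.sum_congr rfl fun j _ => by rw [Finset.mul_sum]
    _ = ∑ j, mu j * (w j ⬝ᵥ u)^2 := by
        refine Finset.sum_congr rfl fun j _ => ?_
        have : ∑ k, w j k * u k = w j ⬝ᵥ u := rfl
        rw [this]; ring

lemma aux_parseval {n : ℕ} (w : Fin n → Fin n → ℝ)
    (horthw : ∀ i j, (∑ k, w i k * w j k) = if i = j then (1 : ℝ) else 0)
    (u : Fin n → ℝ) : ∑ j, (w j ⬝ᵥ u)^2 = u ⬝ᵥ u := by
  calc ∑ j, (w j ⬝ᵥ u)^2 = ∑ j, ∑ k, u k * ((w j ⬝ᵥ u) * w j k) := by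
        refine Finset.sum_congr rfl fun j _ => ?_
        have h : ∑ k, u k * ((w j ⬝ᵥ u) * w j k) = (w j ⬝ᵥ u) * (u ⬝ᵥ w j) := by
          simp only [dotProduct, Finset.mul_sum]
          exact Finset.sum_congr rfl fun k _ => by ring
        rw [h, dotProduct_comm]; ring
    _ = ∑ k, u k * u k := by
        rw [Finset.sum_comm]
        refine Finset.sum_congr rfl fun k _ => ?_
        rw [← Finset.mul_sum, aux_expand w horthw u k]
    _ = u ⬝ᵥ u := rfl

lemma aux_frobInner_sum_smul {n r : ℕ} (A : Matrix (Fin n) (Fin n) ℝ) (c : Fin r → ℝ)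
    (v : Fin r → Fin n → ℝ) :
    frobInner A (∑ t, c t • Matrix.vecMulVec (v t) (v t)) = ∑ t, c t * (v t ⬝ᵥ (A *ᵥ v t)) := by
  unfold frobInner
  rw [Matrix.transpose_sum, Finset.mul_sum, Matrix.trace_sum]
  refine Finset.sum_congr rfl fun t _ => ?_
  rw [Matrix.transpose_smul, Matrix.mul_smul, Matrix.trace_smul, smul_eq_mul]
  congr 1
  exact aux_frobInner_vecMulVec A (v t)

lemma aux_trace_sum_smul {n r : ℕ} (c : Fin r → ℝ) (v : Fin r → Fin n → ℝ) :
    Matrix.trace (∑ t, c t • Matrix.vecMulVec (v t) (v t)) = ∑ t, c t * (v t ⬝ᵥ v t) := by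
  rw [Matrix.trace_sum]
  refine Finset.sum_congr rfl fun t _ => ?_
  rw [Matrix.trace_smul, smul_eq_mul]
  congr 1

/-- at an optimal solution, the eigenvectors of X* (with positive
eigenvalue) are eigenvectors of ∇f(X*) corresponding to its smallest eigenvalue. -/
theorem stmt3 (n r : ℕ) (hr : 1 ≤ r) (hrn : r ≤ n)
    (f : Matrix (Fin n) (Fin n) ℝ → ℝ)
    (g : Matrix (Fin n) (Fin n) ℝ → Matrix (Fin n) (Fin n) ℝ)
    (hconv : ConvexOn ℝ Set.univ f) (hgrad : IsGradient f g)
    (Xstar : Matrix (Fin n) (Fin n) ℝ)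
    (hmin : IsMinimizerOn f (spectrahedron n) Xstar)
    (lamX : Fin r → ℝ) (v : Fin r → Fin n → ℝ)
    (hpos : ∀ i, 0 < lamX i)
    (horth : ∀ i j, (∑ k, v i k * v j k) = if i = j then (1 : ℝ) else 0)
    (hXdecomp : Xstar = ∑ i, lamX i • Matrix.vecMulVec (v i) (v i))
    (mu : Fin n → ℝ) (w : Fin n → Fin n → ℝ)
    (hmu : IsEigenDecomp (g Xstar) mu w) :
    ∀ i : Fin r, (g Xstar).mulVec (v i) = mu ⟨n - 1, by omega⟩ • v i := by
  obtain ⟨hmono, horthw, hG⟩ := hmu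
  obtain ⟨⟨hXpsd, hXtr⟩, hminf⟩ := hmin
  have hn : 0 < n := by omega
  set G := g Xstar with hGdef
  set N : Fin n := ⟨n - 1, by omega⟩ with hNdef
  -- smallest eigenvalue
  have hμle : ∀ j, mu N ≤ mu j := by
    intro j
    refine hmono ?_
    rw [Fin.le_def]
    have := j.isLt
    simp only [hNdef]
    omega
  -- first-order optimality
  have hfo : ∀ Z ∈ spectrahedron n, frobInner G Xstar ≤ frobInner G Z := by
    intro Z hZ
    have hd := hgrad Xstar (Z - Xstar)
    have hkey : 0 ≤ frobInner G (Z - Xstar) := by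
      refine aux_deriv_nonneg_of_min _ _ hd ?_
      intro t ht
      have hmem : Xstar + t • (Z - Xstar) ∈ spectrahedron n := by
        have h1 : Xstar + t • (Z - Xstar) = (1 - t) • Xstar + t • Z := by module
        rw [h1]
        refine ⟨aux_psd_add (aux_psd_smul hXpsd (by linarith [ht.2] : (0:ℝ) ≤ 1 - t))
          (aux_psd_smul hZ.1 ht.1.le), ?_⟩
        rw [Matrix.trace_add, Matrix.trace_smul, Matrix.trace_smul, hXtr, hZ.2]
        simp
      simpa using hminf _ hmem
    have hlin : frobInner G (Z - Xstar) = frobInner G Z - frobInner G Xstar := by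
      unfold frobInner
      rw [Matrix.transpose_sub, Matrix.mul_sub, Matrix.trace_sub]
    rw [hlin] at hkey
    linarith
  -- quadratic form of G
  have hQ : ∀ u : Fin n → ℝ, u ⬝ᵥ (G *ᵥ u) = ∑ j, mu j * (w j ⬝ᵥ u)^2 := by
    intro u
    rw [hG]
    exact aux_quad_decomp mu w u
  -- the candidate Z
  have hZspec : Matrix.vecMulVec (w N) (w N) ∈ spectrahedron n := by
    refine ⟨aux_vecMulVec_psd _, ?_⟩
    have : Matrix.trace (Matrix.vecMulVec (w N) (w N)) = ∑ k, w N k * w N k := rfl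
    rw [this]
    simpa using horthw N N
  have hwd : ∀ j j' : Fin n, w j ⬝ᵥ w j' = if j = j' then (1:ℝ) else 0 := fun j j' => horthw j j'
  have hfZ : frobInner G (Matrix.vecMulVec (w N) (w N)) = mu N := by
    rw [aux_frobInner_vecMulVec, hQ]
    rw [Finset.sum_eq_single N]
    · rw [hwd N N]
      simp
    · intro j _ hj
      rw [hwd j N]
      simp [hj]
    · simp
  have hfX : frobInner G Xstar = ∑ t, lamX t * (v t ⬝ᵥ (G *ᵥ v t)) := by
    conv_lhs => rw [hXdecomp]
    exact aux_frobInner_sum_smul G lamX v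
  have hsum1 : ∑ t, lamX t = 1 := by
    have h := hXtr
    rw [hXdecomp, aux_trace_sum_smul] at h
    have hv1 : ∀ t : Fin r, v t ⬝ᵥ v t = 1 := fun t => by simpa [dotProduct] using horth t t
    calc ∑ t, lamX t = ∑ t, lamX t * (v t ⬝ᵥ v t) := by
          refine Finset.sum_congr rfl fun t _ => ?_
          rw [hv1 t, mul_one]
      _ = 1 := h
  have hopt : ∑ t, lamX t * (v t ⬝ᵥ (G *ᵥ v t)) ≤ mu N := by
    have h := hfo _ hZspec
    rw [hfZ, hfX] at h
    exact h
  have hPar : ∀ t : Fin r, ∑ j, (w j ⬝ᵥ v t)^2 = 1 := by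
    intro t
    rw [aux_parseval w horthw]
    simpa [dotProduct] using horth t t
  have hQlow : ∀ t : Fin r, mu N ≤ v t ⬝ᵥ (G *ᵥ v t) := by
    intro t
    rw [hQ]
    calc mu N = ∑ j, mu N * (w j ⬝ᵥ v t)^2 := by rw [← Finset.mul_sum, hPar t, mul_one]
      _ ≤ ∑ j, mu j * (w j ⬝ᵥ v t)^2 :=
          Finset.sum_le_sum fun j _ => mul_le_mul_of_nonneg_right (hμle j) (sq_nonneg _)
  have hQeq : ∀ t : Fin r, v t ⬝ᵥ (G *ᵥ v t) = mu N := by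
    intro t
    by_contra hne
    have hlt : mu N < v t ⬝ᵥ (G *ᵥ v t) := lt_of_le_of_ne (hQlow t) (Ne.symm hne)
    have hstrict : mu N < ∑ s, lamX s * (v s ⬝ᵥ (G *ᵥ v s)) := by
      calc mu N = ∑ s, lamX s * mu N := by rw [← Finset.sum_mul, hsum1, one_mul]
        _ < ∑ s, lamX s * (v s ⬝ᵥ (G *ᵥ v s)) := by
            refine Finset.sum_lt_sum (fun s _ => mul_le_mul_of_nonneg_left (hQlow s) (hpos s).le)
              ⟨t, Finset.mem_univ t, mul_lt_mul_of_pos_left hlt (hpos t)⟩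
    linarith
  intro i
  have hterm : ∀ j, (mu j - mu N) * (w j ⬝ᵥ v i) = 0 := by
    have hzero : ∑ j, (mu j - mu N) * (w j ⬝ᵥ v i)^2 = 0 := by
      have h1 : ∑ j, (mu j - mu N) * (w j ⬝ᵥ v i)^2
          = (∑ j, mu j * (w j ⬝ᵥ v i)^2) - mu N * ∑ j, (w j ⬝ᵥ v i)^2 := by
        rw [Finset.mul_sum, ← Finset.sum_sub_distrib]
        exact Finset.sum_congr rfl fun j _ => by ring
      rw [h1, ← hQ, hQeq i, hPar i, mul_one, sub_self]
    have hnn : ∀ j ∈ Finset.univ, 0 ≤ (mu j - mu N) * (w j ⬝ᵥ v i)^2 :=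
      fun j _ => mul_nonneg (by linarith [hμle j]) (sq_nonneg _)
    intro j
    have h0 := (Finset.sum_eq_zero_iff_of_nonneg hnn).mp hzero j (Finset.mem_univ j)
    rcases mul_eq_zero.mp h0 with h | h
    · rw [h, zero_mul]
    · have : w j ⬝ᵥ v i = 0 := by
        have := sq_eq_zero_iff.mp h
        exact this
      rw [this, mul_zero]
  funext k
  have hGv : (G *ᵥ v i) k = ∑ j, mu j * (w j ⬝ᵥ v i) * w j k := by
    rw [hG]
    exact aux_mulVec_decomp mu w (v i) k
  have hrhs : (mu ⟨n - 1, by omega⟩ • v i) k = mu N * v i k := rfl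
  rw [hGv, hrhs]
  calc ∑ j, mu j * (w j ⬝ᵥ v i) * w j k = ∑ j, mu N * ((w j ⬝ᵥ v i) * w j k) := by
        refine Finset.sum_congr rfl fun j _ => ?_
        have hc : mu j * (w j ⬝ᵥ v i) = mu N * (w j ⬝ᵥ v i) := by
          have h := hterm j
          nlinarith [hterm j]
        rw [hc, mul_assoc]
    _ = mu N * v i k := by rw [← Finset.mul_sum, aux_expand w horthw (v i) k]

end LRSGD
end

section
/- Let ζ ≥ 0 and let (1+ζ)S_n = {(1+ζ)X : X ∈ S_n}. Let M be an n×n real symmetric matrix with eigendecomposition M = Σ_{i=1}^n λ_i v_i v_iᵀ (λ_1 ≥ ... ≥ λ_n, orthonormal v_i). Then the Euclidean projection of M onto (1+ζ)S_n equals Σ_{i=1}^n max{0, λ_i − σ} v_i v_iᵀ, where σ is the unique scalar satisfying Σ_{i=1}^n max{0, λ_i − σ} = 1 + ζ. -/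
open scoped BigOperators
open MeasureTheory
open scoped Matrix

namespace LRSGD

def scaledSpectrahedron (n : ℕ) (c : ℝ) : Set (Matrix (Fin n) (Fin n) ℝ) :=
  {X | ∃ Y ∈ spectrahedron n, X = c • Y}

/-! ### Auxiliary lemmas: Frobenius inner product -/

noncomputable def ip {n : ℕ} (A B : Matrix (Fin n) (Fin n) ℝ) : ℝ :=
  ∑ i, ∑ j, A i j * B i j

lemma frobNorm_eq_ip {n : ℕ} (A : Matrix (Fin n) (Fin n) ℝ) :
    frobNorm A = Real.sqrt (ip A A) := by
  simp [frobNorm, ip, sq]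

lemma ip_self_nonneg {n : ℕ} (A : Matrix (Fin n) (Fin n) ℝ) : 0 ≤ ip A A :=
  Finset.sum_nonneg fun i _ => Finset.sum_nonneg fun j _ => mul_self_nonneg _

lemma ip_comm {n : ℕ} (A B : Matrix (Fin n) (Fin n) ℝ) : ip A B = ip B A := by
  simp [ip, mul_comm]

lemma ip_add_left {n : ℕ} (A B C : Matrix (Fin n) (Fin n) ℝ) :
    ip (A + B) C = ip A C + ip B C := by
  simp [ip, add_mul, Finset.sum_add_distrib]

lemma ip_add_right {n : ℕ} (A B C : Matrix (Fin n) (Fin n) ℝ) :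
    ip A (B + C) = ip A B + ip A C := by
  rw [ip_comm, ip_add_left, ip_comm B, ip_comm C]

lemma ip_sub_right {n : ℕ} (A B C : Matrix (Fin n) (Fin n) ℝ) :
    ip A (B - C) = ip A B - ip A C := by
  simp [ip, mul_sub, Finset.sum_sub_distrib]

lemma ip_smul_left {n : ℕ} (c : ℝ) (A B : Matrix (Fin n) (Fin n) ℝ) :
    ip (c • A) B = c * ip A B := by
  simp [ip, Finset.mul_sum, mul_assoc]

lemma ip_sum_left {n : ℕ} {ι : Type*} (s : Finset ι)
    (A : ι → Matrix (Fin n) (Fin n) ℝ) (B : Matrix (Fin n) (Fin n) ℝ) :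
    ip (∑ i ∈ s, A i) B = ∑ i ∈ s, ip (A i) B := by
  classical
  induction s using Finset.induction with
  | empty => simp [ip]
  | insert _ _ h ih => rw [Finset.sum_insert h, ip_add_left, ih, Finset.sum_insert h]

/-! ### Auxiliary lemmas: orthonormal frames -/

section Frame
variable {n : ℕ} {v : Fin n → Fin n → ℝ}
  (hv : ∀ i j, (∑ k, v i k * v j k) = if i = j then (1 : ℝ) else 0)
include hv

/-- columns are also orthonormal -/
lemma frame_col (a b : Fin n) :
    (∑ i, v i a * v i b) = if a = b then (1 : ℝ) else 0 := by
  classical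
  set V : Matrix (Fin n) (Fin n) ℝ := Matrix.of v with hV
  have h1 : V * Vᵀ = 1 := by
    ext i j
    simp only [Matrix.mul_apply, Matrix.transpose_apply, hV, Matrix.of_apply,
      Matrix.one_apply]
    exact hv i j
  have h2 : Vᵀ * V = 1 := mul_eq_one_comm.mp h1
  have := congrFun (congrFun h2 a) b
  simpa [Matrix.mul_apply, Matrix.transpose_apply, hV, Matrix.one_apply] using this

lemma ip_E_E (i j : Fin n) :
    ip (Matrix.vecMulVec (v i) (v i)) (Matrix.vecMulVec (v j) (v j))
      = if i = j then (1 : ℝ) else 0 := by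
  have h : ∀ a b : Fin n, (v i a * v i b) * (v j a * v j b)
      = (v i a * v j a) * (v i b * v j b) := fun a b => by ring
  simp only [ip, Matrix.vecMulVec_apply, h, ← Finset.mul_sum, ← Finset.sum_mul]
  rw [hv i j]
  split_ifs <;> simp

omit hv in
lemma ip_E_quad (i : Fin n) (Z : Matrix (Fin n) (Fin n) ℝ) :
    ip (Matrix.vecMulVec (v i) (v i)) Z = (v i) ⬝ᵥ (Z *ᵥ (v i)) := by
  simp only [ip, Matrix.vecMulVec_apply, dotProduct, Matrix.mulVec,
    Finset.mul_sum]
  exact Finset.sum_congr rfl fun a _ => Finset.sum_congr rfl fun b _ => by ring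

omit hv in
lemma ip_E_nonneg (i : Fin n) {Z : Matrix (Fin n) (Fin n) ℝ} (hZ : Z.PosSemidef) :
    0 ≤ ip (Matrix.vecMulVec (v i) (v i)) Z := by
  rw [ip_E_quad]
  simpa using hZ.dotProduct_mulVec_nonneg (v i)

lemma sum_ip_E (Z : Matrix (Fin n) (Fin n) ℝ) :
    (∑ i, ip (Matrix.vecMulVec (v i) (v i)) Z) = Z.trace := by
  classical
  simp only [ip, Matrix.vecMulVec_apply]
  have h1 : (∑ i, ∑ a, ∑ b, v i a * v i b * Z a b)
      = ∑ a, ∑ b, ∑ i, v i a * v i b * Z a b := by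
    rw [Finset.sum_comm]
    exact Finset.sum_congr rfl fun a _ => Finset.sum_comm
  rw [h1]
  have h2 : ∀ a b : Fin n, (∑ i, v i a * v i b * Z a b)
      = (if a = b then (1:ℝ) else 0) * Z a b := by
    intro a b
    rw [← Finset.sum_mul, frame_col hv]
  simp only [h2, ite_mul, one_mul, zero_mul]
  simp [Matrix.trace, Matrix.diag]

omit hv in
lemma posSemidef_sumE (d : Fin n → ℝ) (hd : ∀ i, 0 ≤ d i) :
    (∑ i, d i • Matrix.vecMulVec (v i) (v i)).PosSemidef := by
  classical
  set V : Matrix (Fin n) (Fin n) ℝ := Matrix.of v with hV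
  have key : (∑ i, d i • Matrix.vecMulVec (v i) (v i))
      = Vᵀ * Matrix.diagonal d * (Vᵀ)ᴴ := by
    ext a b
    simp only [Matrix.sum_apply, Matrix.smul_apply, Matrix.vecMulVec_apply,
      smul_eq_mul, Matrix.mul_apply, Matrix.conjTranspose_apply,
      Matrix.transpose_apply, Matrix.diagonal_apply, star_trivial, hV,
      Matrix.of_apply, ite_mul, zero_mul, mul_ite, mul_zero]
    simp only [Finset.sum_ite_eq', Finset.mem_univ, if_true]
    exact Finset.sum_congr rfl fun k _ => by ring
  rw [key]
  exact (Matrix.PosSemidef.diagonal hd).mul_mul_conjTranspose_same Vᵀ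

lemma trace_E (i : Fin n) : (Matrix.vecMulVec (v i) (v i)).trace = 1 := by
  have := hv i i
  simpa [Matrix.trace, Matrix.diag, Matrix.vecMulVec_apply] using this

lemma trace_sumE (d : Fin n → ℝ) :
    (∑ i, d i • Matrix.vecMulVec (v i) (v i)).trace = ∑ i, d i := by
  rw [Matrix.trace_sum]
  simp [Matrix.trace_smul, trace_E hv]

omit hv in
lemma ip_sumE (d : Fin n → ℝ) (B : Matrix (Fin n) (Fin n) ℝ) :
    ip (∑ i, d i • Matrix.vecMulVec (v i) (v i)) B
      = ∑ i, d i * ip (Matrix.vecMulVec (v i) (v i)) B := by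
  rw [ip_sum_left]
  exact Finset.sum_congr rfl fun i _ => ip_smul_left _ _ _

end Frame

/-- projection onto the scaled spectrahedron (1+ζ)S_n. -/
theorem stmt6 (n : ℕ) (hn : 1 ≤ n) (ζ : ℝ) (hζ : 0 ≤ ζ)
    (M : Matrix (Fin n) (Fin n) ℝ) (hM : M.IsSymm)
    (lam : Fin n → ℝ) (v : Fin n → Fin n → ℝ)
    (hdecomp : IsEigenDecomp M lam v) :
    (∃! sigma : ℝ, ∑ i, max 0 (lam i - sigma) = 1 + ζ) ∧
      ∀ sigma : ℝ, (∑ i, max 0 (lam i - sigma) = 1 + ζ) →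
        IsProjOn (scaledSpectrahedron n (1 + ζ)) M
          (∑ i, max 0 (lam i - sigma) • Matrix.vecMulVec (v i) (v i)) := by
  classical
  obtain ⟨hanti, hv, hMeq⟩ := hdecomp
  have hc : (0:ℝ) < 1 + ζ := by linarith
  -- Part 1 : existence and uniqueness of sigma
  have hcont : Continuous (fun σ : ℝ => ∑ i, max 0 (lam i - σ)) := by
    apply continuous_finset_sum
    intro i _
    exact continuous_const.max (continuous_const.sub continuous_id)
  have hi0 : (0 : ℕ) < n := hn
  set i0 : Fin n := ⟨0, hi0⟩ with hi0def
  have hle : ∀ i, lam i ≤ lam i0 := fun i => hanti (by simp [hi0def, Fin.le_def])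
  have hfb : (∑ i, max 0 (lam i - lam i0)) = 0 :=
    Finset.sum_eq_zero fun i _ => max_eq_left (by linarith [hle i])
  have hfa : 1 + ζ ≤ ∑ i, max 0 (lam i - (lam i0 - (1 + ζ))) := by
    have h0 : lam i0 - (lam i0 - (1 + ζ)) = 1 + ζ := by ring
    have h1 : max 0 (lam i0 - (lam i0 - (1 + ζ))) = 1 + ζ := by
      rw [h0, max_eq_right hc.le]
    calc 1 + ζ = max 0 (lam i0 - (lam i0 - (1 + ζ))) := h1.symm
      _ ≤ ∑ i, max 0 (lam i - (lam i0 - (1 + ζ))) :=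
          Finset.single_le_sum (f := fun i => max 0 (lam i - (lam i0 - (1 + ζ))))
            (fun i _ => le_max_left 0 _) (Finset.mem_univ i0)
  have hex : ∃ σ : ℝ, (∑ i, max 0 (lam i - σ)) = 1 + ζ := by
    have hab : lam i0 - (1 + ζ) ≤ lam i0 := by linarith
    have hiv := intermediate_value_Icc' hab hcont.continuousOn
    have hmem : (1 + ζ) ∈ Set.Icc ((fun σ : ℝ => ∑ i, max 0 (lam i - σ)) (lam i0))
        ((fun σ : ℝ => ∑ i, max 0 (lam i - σ)) (lam i0 - (1 + ζ))) := by
      simp only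
      rw [hfb]
      exact ⟨hc.le, hfa⟩
    obtain ⟨σ, _, hσ⟩ := hiv hmem
    exact ⟨σ, hσ⟩
  have hstrict : ∀ s t : ℝ, s < t → (∑ i, max 0 (lam i - t)) = 1 + ζ →
      (∑ i, max 0 (lam i - t)) < ∑ i, max 0 (lam i - s) := by
    intro s t hst hft
    have hpos : ∃ i, 0 < lam i - t := by
      by_contra h
      push_neg at h
      have h0 : (∑ i, max 0 (lam i - t)) = 0 :=
        Finset.sum_eq_zero fun i _ => max_eq_left (h i)
      rw [hft] at h0; linarith
    obtain ⟨i, hi⟩ := hpos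
    refine Finset.sum_lt_sum (fun j _ => max_le_max le_rfl (by linarith)) ?_
    refine ⟨i, Finset.mem_univ i, ?_⟩
    rw [max_eq_right (by linarith), max_eq_right (by linarith)]
    linarith
  have huniq : ∃! sigma : ℝ, (∑ i, max 0 (lam i - sigma)) = 1 + ζ := by
    obtain ⟨σ0, hσ0⟩ := hex
    refine ⟨σ0, hσ0, fun y hy => ?_⟩
    rcases lt_trichotomy y σ0 with h | h | h
    · have := hstrict y σ0 h hσ0
      rw [hσ0, hy] at this
      exact absurd this (lt_irrefl _)
    · exact h
    · have := hstrict σ0 y h hy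
      rw [hy, hσ0] at this
      exact absurd this (lt_irrefl _)
  refine ⟨huniq, ?_⟩
  -- Part 2 : the projection formula
  intro sigma hsigma
  set P : Matrix (Fin n) (Fin n) ℝ :=
    ∑ i, max 0 (lam i - sigma) • Matrix.vecMulVec (v i) (v i) with hP
  have hcf0 : ∀ i : Fin n, 0 ≤ max 0 (lam i - sigma) := fun i => le_max_left _ _
  constructor
  · -- membership in the scaled spectrahedron
    refine ⟨(1 + ζ)⁻¹ • P, ⟨?_, ?_⟩, ?_⟩
    · have hsmul : (1 + ζ)⁻¹ • P
          = ∑ i, ((1 + ζ)⁻¹ * max 0 (lam i - sigma)) • Matrix.vecMulVec (v i) (v i) := by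
        rw [hP, Finset.smul_sum]
        exact Finset.sum_congr rfl fun i _ => (smul_smul _ _ _)
      rw [hsmul]
      exact posSemidef_sumE _ fun i => mul_nonneg (inv_nonneg.mpr hc.le) (hcf0 i)
    · rw [Matrix.trace_smul, hP, trace_sumE hv, hsigma, smul_eq_mul,
        inv_mul_cancel₀ hc.ne']
    · rw [smul_smul, mul_inv_cancel₀ hc.ne', one_smul]
  · -- optimality
    intro Z hZ
    obtain ⟨Y, ⟨hYpsd, hYtr⟩, rfl⟩ := hZ
    have hZpsd : ((1 + ζ) • Y).PosSemidef := by
      refine Matrix.PosSemidef.of_dotProduct_mulVec_nonneg ?_ (fun x => ?_)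
      · show ((1 + ζ) • Y)ᴴ = (1 + ζ) • Y
        rw [Matrix.conjTranspose_smul, hYpsd.1.eq, star_trivial]
      · rw [Matrix.smul_mulVec, dotProduct_smul, smul_eq_mul]
        exact mul_nonneg hc.le (hYpsd.dotProduct_mulVec_nonneg x)
    have hZtr : ((1 + ζ) • Y).trace = 1 + ζ := by
      rw [Matrix.trace_smul, hYtr, smul_eq_mul, mul_one]
    -- M - P as a sum over the frame
    have hMP : M - P = ∑ i, (lam i - max 0 (lam i - sigma)) • Matrix.vecMulVec (v i) (v i) := by
      rw [hMeq, hP, ← Finset.sum_sub_distrib]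
      exact Finset.sum_congr rfl fun i _ => (sub_smul _ _ _).symm
    have hmin : ∀ i, lam i - max 0 (lam i - sigma) ≤ sigma := by
      intro i
      rcases le_total (lam i) sigma with h | h
      · rw [max_eq_left (by linarith)]; linarith
      · rw [max_eq_right (by linarith)]; linarith
    have hprod : ∀ i, (lam i - max 0 (lam i - sigma)) * max 0 (lam i - sigma)
        = sigma * max 0 (lam i - sigma) := by
      intro i
      rcases le_total (lam i) sigma with h | h
      · rw [max_eq_left (by linarith)]; ring
      · rw [max_eq_right (by linarith)]; ring
    have h1 : ip (M - P) P = sigma * (1 + ζ) := by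
      rw [hMP, ip_sumE]
      have hEP : ∀ i, ip (Matrix.vecMulVec (v i) (v i)) P = max 0 (lam i - sigma) := by
        intro i
        rw [ip_comm, hP, ip_sumE]
        simp only [ip_E_E hv]
        simp [Finset.sum_ite_eq', mul_ite]
      calc (∑ i, (lam i - max 0 (lam i - sigma)) * ip (Matrix.vecMulVec (v i) (v i)) P)
          = ∑ i, (lam i - max 0 (lam i - sigma)) * max 0 (lam i - sigma) := by
            exact Finset.sum_congr rfl fun i _ => by rw [hEP i]
        _ = ∑ i, sigma * max 0 (lam i - sigma) :=
            Finset.sum_congr rfl fun i _ => hprod i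
        _ = sigma * (1 + ζ) := by rw [← Finset.mul_sum, hsigma]
    have h2 : ip (M - P) ((1 + ζ) • Y) ≤ sigma * (1 + ζ) := by
      rw [hMP, ip_sumE]
      calc (∑ i, (lam i - max 0 (lam i - sigma))
              * ip (Matrix.vecMulVec (v i) (v i)) ((1 + ζ) • Y))
          ≤ ∑ i, sigma * ip (Matrix.vecMulVec (v i) (v i)) ((1 + ζ) • Y) :=
            Finset.sum_le_sum fun i _ =>
              mul_le_mul_of_nonneg_right (hmin i) (ip_E_nonneg i hZpsd)
        _ = sigma * ((1 + ζ) • Y).trace := by rw [← Finset.mul_sum, sum_ip_E hv]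
        _ = sigma * (1 + ζ) := by rw [hZtr]
    have hkey : 0 ≤ ip (M - P) (P - (1 + ζ) • Y) := by
      rw [ip_sub_right]
      linarith
    rw [frobNorm_eq_ip, frobNorm_eq_ip]
    apply Real.sqrt_le_sqrt
    have hsplit : M - (1 + ζ) • Y = (M - P) + (P - (1 + ζ) • Y) := by abel
    rw [hsplit, ip_add_left, ip_add_right, ip_add_right]
    have hnn := ip_self_nonneg (P - (1 + ζ) • Y)
    have hcm := ip_comm (P - (1 + ζ) • Y) (M - P)
    linarith

end LRSGD
end

section
/- Let f : 𝕊^n → ℝ be convex and β-smooth, and let X* be a minimizer of f over the spectrahedron S_n with rank(X*) = r, where 1 ≤ r < n. Let μ_1 ≥ ... ≥ μ_n denote the eigenvalues of ∇f(X*) in non-increasing order. Then μ_{n−r} = μ_n if and only if for every ζ > 0 it holds that rank(Π_{(1+ζ)S_n}[X* − β^{−1}∇f(X*)]) > r, where (1+ζ)S_n = {(1+ζ)X : X ∈ S_n} and Π_{(1+ζ)S_n}[·] denotes Euclidean projection onto (1+ζ)S_n. -/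
open scoped BigOperators
open MeasureTheory
open scoped Matrix

namespace LRSGD

set_option maxHeartbeats 1000000

section Aux
variable {n : ℕ}

lemma conjT_real {m k : Type*} (A : Matrix m k ℝ) : Aᴴ = Aᵀ := by
  ext i j; simp [Matrix.conjTranspose_apply]

lemma frobInner_eq_sum (A B : Matrix (Fin n) (Fin n) ℝ) :
    frobInner A B = ∑ i, ∑ j, A i j * B i j := by
  simp [frobInner, Matrix.trace, Matrix.diag, Matrix.mul_apply]

lemma sumSq_nonneg (A : Matrix (Fin n) (Fin n) ℝ) : 0 ≤ ∑ i, ∑ j, (A i j) ^ 2 :=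
  Finset.sum_nonneg fun _ _ => Finset.sum_nonneg fun _ _ => sq_nonneg _

lemma expand_key (M P Z : Matrix (Fin n) (Fin n) ℝ) :
    ∑ i, ∑ j, ((M - Z) i j) ^ 2
      = ∑ i, ∑ j, ((M - P) i j) ^ 2 - 2 * frobInner (M - P) (Z - P)
        + ∑ i, ∑ j, ((Z - P) i j) ^ 2 := by
  rw [frobInner_eq_sum]
  have h : ∀ i j, ((M - Z) i j) ^ 2
      = ((M - P) i j) ^ 2 - 2 * ((M - P) i j * (Z - P) i j) + ((Z - P) i j) ^ 2 := by
    intro i j; simp only [Matrix.sub_apply]; ring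
  simp only [h, Finset.sum_add_distrib, Finset.sum_sub_distrib, ← Finset.mul_sum]

lemma isProjOn_of_var {K : Set (Matrix (Fin n) (Fin n) ℝ)} {M P : Matrix (Fin n) (Fin n) ℝ}
    (hPK : P ∈ K) (hvar : ∀ Z ∈ K, frobInner (M - P) (Z - P) ≤ 0) :
    IsProjOn K M P := by
  refine ⟨hPK, fun Z hZ => ?_⟩
  unfold frobNorm
  apply Real.sqrt_le_sqrt
  have hk := expand_key M P Z
  nlinarith [sumSq_nonneg (Z - P), hvar Z hZ]

lemma proj_unique {K : Set (Matrix (Fin n) (Fin n) ℝ)} {M P P' : Matrix (Fin n) (Fin n) ℝ}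
    (hPK : P ∈ K) (hvar : ∀ Z ∈ K, frobInner (M - P) (Z - P) ≤ 0)
    (hP' : IsProjOn K M P') : P' = P := by
  have h1 : frobNorm (M - P') ≤ frobNorm (M - P) := hP'.2 P hPK
  unfold frobNorm at h1
  have ha := sumSq_nonneg (M - P')
  have hb := sumSq_nonneg (M - P)
  have h2 : ∑ i, ∑ j, ((M - P') i j) ^ 2 ≤ ∑ i, ∑ j, ((M - P) i j) ^ 2 := by
    nlinarith [Real.sq_sqrt ha, Real.sq_sqrt hb,
      Real.sqrt_nonneg (∑ i, ∑ j, ((M - P') i j) ^ 2),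
      Real.sqrt_nonneg (∑ i, ∑ j, ((M - P) i j) ^ 2)]
  have hk := expand_key M P P'
  have h4 : ∑ i, ∑ j, ((P' - P) i j) ^ 2 ≤ 0 := by
    have := hvar P' hP'.1
    linarith
  have h5 : ∑ i, ∑ j, ((P' - P) i j) ^ 2 = 0 := le_antisymm h4 (sumSq_nonneg _)
  have h6 : ∀ i ∈ (Finset.univ : Finset (Fin n)), ∑ j, ((P' - P) i j) ^ 2 = 0 :=
    (Finset.sum_eq_zero_iff_of_nonneg
      (fun i _ => Finset.sum_nonneg fun j _ => sq_nonneg _)).mp h5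
  ext i j
  have h7 : ((P' - P) i j) ^ 2 = 0 :=
    (Finset.sum_eq_zero_iff_of_nonneg (fun j _ => sq_nonneg _)).mp
      (h6 i (Finset.mem_univ i)) j (Finset.mem_univ j)
  have h8 : (P' - P) i j = 0 := by
    exact pow_eq_zero_iff two_ne_zero |>.mp h7
  have := sub_eq_zero.mp h8
  simpa [Matrix.sub_apply] using this


lemma trace_conj {V : Matrix (Fin n) (Fin n) ℝ} (hV : V * Vᵀ = 1) (d : Fin n → ℝ) :
    (Vᵀ * Matrix.diagonal d * V).trace = ∑ i, d i := by
  rw [Matrix.mul_assoc, Matrix.trace_mul_comm, Matrix.mul_assoc, hV, Matrix.mul_one,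
    Matrix.trace_diagonal]

lemma trace_conj' {V : Matrix (Fin n) (Fin n) ℝ} (hVt : Vᵀ * V = 1)
    (Z : Matrix (Fin n) (Fin n) ℝ) : (V * Z * Vᵀ).trace = Z.trace := by
  rw [Matrix.trace_mul_comm, ← Matrix.mul_assoc, hVt, Matrix.one_mul]

lemma frobInner_conj {V : Matrix (Fin n) (Fin n) ℝ} (d : Fin n → ℝ)
    (Z : Matrix (Fin n) (Fin n) ℝ) (hZ : Zᵀ = Z) :
    frobInner (Vᵀ * Matrix.diagonal d * V) Z = ∑ i, d i * (V * Z * Vᵀ) i i := by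
  rw [frobInner, hZ, Matrix.mul_assoc (Vᵀ * Matrix.diagonal d) V Z, Matrix.trace_mul_comm,
    ← Matrix.mul_assoc]
  simp [Matrix.trace, Matrix.diag, Matrix.mul_diagonal, mul_comm]

lemma frobInner_sub_right (A B C : Matrix (Fin n) (Fin n) ℝ) :
    frobInner A (B - C) = frobInner A B - frobInner A C := by
  simp [frobInner, Matrix.transpose_sub, Matrix.mul_sub]

lemma conj_diag_nonneg {V Z : Matrix (Fin n) (Fin n) ℝ} (hZ : Z.PosSemidef) (i : Fin n) :
    0 ≤ (V * Z * Vᵀ) i i := by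
  have h := hZ.dotProduct_mulVec_nonneg (fun k => V i k)
  have heq : (V * Z * Vᵀ) i i
      = dotProduct (star fun k => V i k) (Z *ᵥ fun k => V i k) := by
    simp only [Matrix.mul_apply, Matrix.transpose_apply, dotProduct, Matrix.mulVec,
      star_trivial, dotProduct, Finset.sum_mul]
    rw [Finset.sum_comm]
    apply Finset.sum_congr rfl; intro k _
    rw [Finset.mul_sum]
    apply Finset.sum_congr rfl; intro l _
    ring
  rw [heq]; exact h

lemma psd_conj {V : Matrix (Fin n) (Fin n) ℝ} {d : Fin n → ℝ} (hd : ∀ i, 0 ≤ d i) :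
    (Vᵀ * Matrix.diagonal d * V).PosSemidef := by
  have h := (Matrix.posSemidef_diagonal_iff.mpr hd).mul_mul_conjTranspose_same Vᵀ
  rwa [conjT_real, Matrix.transpose_transpose] at h

lemma conj_transpose_self (V : Matrix (Fin n) (Fin n) ℝ) (d : Fin n → ℝ) :
    (Vᵀ * Matrix.diagonal d * V)ᵀ = Vᵀ * Matrix.diagonal d * V := by
  simp [Matrix.transpose_mul, Matrix.diagonal_transpose, Matrix.mul_assoc]

lemma conj_conj {V : Matrix (Fin n) (Fin n) ℝ} (hV : V * Vᵀ = 1) (d : Fin n → ℝ) :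
    V * (Vᵀ * Matrix.diagonal d * V) * Vᵀ = Matrix.diagonal d := by
  have h1 : V * (Vᵀ * Matrix.diagonal d * V) * Vᵀ
      = (V * Vᵀ) * Matrix.diagonal d * (V * Vᵀ) := by
    simp only [Matrix.mul_assoc]
  rw [h1, hV, Matrix.one_mul, Matrix.mul_one]

lemma mem_spectra {V : Matrix (Fin n) (Fin n) ℝ} (hV : V * Vᵀ = 1) {d : Fin n → ℝ}
    (hd : ∀ i, 0 ≤ d i) (hsum : ∑ i, d i = 1) :
    Vᵀ * Matrix.diagonal d * V ∈ spectrahedron n :=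
  ⟨psd_conj hd, by rw [trace_conj hV, hsum]⟩

lemma mem_scaled {V : Matrix (Fin n) (Fin n) ℝ} (hV : V * Vᵀ = 1) {d : Fin n → ℝ}
    (hd : ∀ i, 0 ≤ d i) {c : ℝ} (hc : 0 < c) (hsum : ∑ i, d i = c) :
    Vᵀ * Matrix.diagonal d * V ∈ scaledSpectrahedron n c := by
  refine ⟨Vᵀ * Matrix.diagonal (fun i => c⁻¹ * d i) * V,
    mem_spectra hV (fun i => mul_nonneg (by positivity) (hd i)) ?_, ?_⟩
  · rw [← Finset.mul_sum, hsum, inv_mul_cancel₀ hc.ne']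
  · have : Matrix.diagonal (fun i => c⁻¹ * d i) = c⁻¹ • Matrix.diagonal d := by
      rw [← Matrix.diagonal_smul]; rfl
    rw [this, Matrix.mul_smul, Matrix.smul_mul, smul_smul, mul_inv_cancel₀ hc.ne', one_smul]

lemma rank_conj {V : Matrix (Fin n) (Fin n) ℝ} (hV : V * Vᵀ = 1) (d : Fin n → ℝ) :
    (Vᵀ * Matrix.diagonal d * V).rank = Fintype.card {i // d i ≠ 0} := by
  have hdet : IsUnit V.det := by
    have := congrArg Matrix.det hV
    rw [Matrix.det_mul, Matrix.det_one] at this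
    exact IsUnit.of_mul_eq_one _ this
  have hdetT : IsUnit Vᵀ.det := by rwa [Matrix.det_transpose]
  rw [Matrix.rank_mul_eq_left_of_isUnit_det V _ hdet,
    Matrix.rank_mul_eq_right_of_isUnit_det Vᵀ _ hdetT, Matrix.rank_diagonal]

lemma psd_smul {Z : Matrix (Fin n) (Fin n) ℝ} (hZ : Z.PosSemidef) {c : ℝ} (hc : 0 ≤ c) :
    (c • Z).PosSemidef := by
  constructor
  · have h1 := hZ.1
    unfold Matrix.IsHermitian at h1 ⊢
    rw [conjT_real] at h1 ⊢
    rw [Matrix.transpose_smul, h1]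
  · intro x
    have := hZ.2 x
    exact (hZ.smul hc).2 x

/-- The main projection lemma: thresholded eigenvalues give the metric projection onto the
scaled spectrahedron, and it is the unique one. -/
lemma proj_main {V : Matrix (Fin n) (Fin n) ℝ} (hV : V * Vᵀ = 1) (lam : Fin n → ℝ)
    (θ c : ℝ) (hc : 0 < c) (hsum : ∑ i, max (lam i - θ) 0 = c) :
    IsProjOn (scaledSpectrahedron n c) (Vᵀ * Matrix.diagonal lam * V)
      (Vᵀ * Matrix.diagonal (fun i => max (lam i - θ) 0) * V) ∧
    ∀ P', IsProjOn (scaledSpectrahedron n c) (Vᵀ * Matrix.diagonal lam * V) P' →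
      P' = Vᵀ * Matrix.diagonal (fun i => max (lam i - θ) 0) * V := by
  have hVt : Vᵀ * V = 1 := mul_eq_one_comm.mp hV
  set p : Fin n → ℝ := fun i => max (lam i - θ) 0 with hp
  set M : Matrix (Fin n) (Fin n) ℝ := Vᵀ * Matrix.diagonal lam * V with hM
  set P : Matrix (Fin n) (Fin n) ℝ := Vᵀ * Matrix.diagonal p * V with hPdef
  have hPK : P ∈ scaledSpectrahedron n c := mem_scaled hV (fun i => le_max_right _ _) hc hsum
  have hMP : M - P = Vᵀ * Matrix.diagonal (fun i => lam i - p i) * V := by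
    rw [hM, hPdef, ← Matrix.sub_mul, ← Matrix.mul_sub, Matrix.diagonal_sub]
  have hvar : ∀ Z ∈ scaledSpectrahedron n c, frobInner (M - P) (Z - P) ≤ 0 := by
    rintro Z ⟨Y, hY, rfl⟩
    have hZpsd : (c • Y).PosSemidef := psd_smul hY.1 hc.le
    have hZsym : (c • Y)ᵀ = c • Y := by
      have := hZpsd.1; rwa [Matrix.IsHermitian, conjT_real] at this
    have hZtr : (c • Y).trace = c := by rw [Matrix.trace_smul, hY.2, smul_eq_mul, mul_one]
    rw [frobInner_sub_right, hMP]
    -- inner with Z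
    have hIZ : frobInner (Vᵀ * Matrix.diagonal (fun i => lam i - p i) * V) (c • Y)
        = ∑ i, (lam i - p i) * (V * (c • Y) * Vᵀ) i i := frobInner_conj _ _ hZsym
    have hIP : frobInner (Vᵀ * Matrix.diagonal (fun i => lam i - p i) * V) P
        = ∑ i, (lam i - p i) * p i := by
      rw [frobInner_conj _ _ (conj_transpose_self V p),
        show V * P * Vᵀ = Matrix.diagonal p from conj_conj hV p]
      simp [Matrix.diagonal_apply_eq]
    have hsumq : ∑ i, (V * (c • Y) * Vᵀ) i i = c := by
      have : ∑ i, (V * (c • Y) * Vᵀ) i i = (V * (c • Y) * Vᵀ).trace := rfl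
      rw [this, trace_conj' hVt, hZtr]
    have hq0 : ∀ i, 0 ≤ (V * (c • Y) * Vᵀ) i i := fun i => conj_diag_nonneg hZpsd i
    have hle1 : ∀ i, (lam i - p i) * (V * (c • Y) * Vᵀ) i i ≤ θ * (V * (c • Y) * Vᵀ) i i := by
      intro i
      apply mul_le_mul_of_nonneg_right _ (hq0 i)
      have hpi : p i = max (lam i - θ) 0 := rfl
      rcases le_or_gt (lam i - θ) 0 with h | h
      · rw [hpi, max_eq_right h]; linarith
      · rw [hpi, max_eq_left h.le]; linarith
    have heqP : ∀ i, (lam i - p i) * p i = θ * p i := by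
      intro i
      have hpi : p i = max (lam i - θ) 0 := rfl
      rcases le_or_gt (lam i - θ) 0 with h | h
      · rw [hpi, max_eq_right h]; ring
      · rw [hpi, max_eq_left h.le]; ring
    calc frobInner (Vᵀ * Matrix.diagonal (fun i => lam i - p i) * V) (c • Y)
          - frobInner (Vᵀ * Matrix.diagonal (fun i => lam i - p i) * V) P
        = (∑ i, (lam i - p i) * (V * (c • Y) * Vᵀ) i i) - ∑ i, (lam i - p i) * p i := by
          rw [hIZ, hIP]
      _ ≤ (∑ i, θ * (V * (c • Y) * Vᵀ) i i) - ∑ i, θ * p i := by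
          have h1 := Finset.sum_le_sum (fun i (_ : i ∈ Finset.univ) => hle1 i)
          have h2 : ∑ i, (lam i - p i) * p i = ∑ i, θ * p i :=
            Finset.sum_congr rfl fun i _ => heqP i
          linarith
      _ = θ * c - θ * c := by rw [← Finset.mul_sum, ← Finset.mul_sum, hsumq, hsum]
      _ = 0 := by ring
  exact ⟨isProjOn_of_var hPK hvar, fun P' hP' => proj_unique hPK hvar hP'⟩

lemma first_order {f : Matrix (Fin n) (Fin n) ℝ → ℝ}
    {g : Matrix (Fin n) (Fin n) ℝ → Matrix (Fin n) (Fin n) ℝ}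
    (hgrad : IsGradient f g) {Xstar : Matrix (Fin n) (Fin n) ℝ}
    (hmin : IsMinimizerOn f (spectrahedron n) Xstar) :
    ∀ Z ∈ spectrahedron n, 0 ≤ frobInner (g Xstar) (Z - Xstar) := by
  intro Z hZ
  have h := hgrad Xstar (Z - Xstar)
  have hmem : ∀ t : ℝ, t ∈ Set.Ioc (0:ℝ) 1 → Xstar + t • (Z - Xstar) ∈ spectrahedron n := by
    intro t ht
    have hid : Xstar + t • (Z - Xstar) = (1 - t) • Xstar + t • Z := by
      rw [smul_sub, sub_smul, one_smul]; abel
    rw [hid]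
    refine ⟨(psd_smul hmin.1.1 (by linarith [ht.2])).add (psd_smul hZ.1 ht.1.le), ?_⟩
    rw [Matrix.trace_add, Matrix.trace_smul, Matrix.trace_smul, hmin.1.2, hZ.2]
    simp
  have hslope : Filter.Tendsto (slope (fun t : ℝ => f (Xstar + t • (Z - Xstar))) 0)
      (nhdsWithin 0 (Set.Ioi 0)) (nhds (frobInner (g Xstar) (Z - Xstar))) :=
    (hasDerivAt_iff_tendsto_slope.mp h).mono_left
      (nhdsWithin_mono 0 (fun x hx => ne_of_gt hx))
  refine ge_of_tendsto hslope ?_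
  filter_upwards [Ioc_mem_nhdsGT_of_mem (show (0:ℝ) ∈ Set.Ico (0:ℝ) 1 by
    constructor <;> norm_num)] with t ht
  rw [slope_def_field]
  apply div_nonneg _ (by linarith [ht.1])
  have h0 : Xstar + (0:ℝ) • (Z - Xstar) = Xstar := by simp
  have := hmin.2 _ (hmem t ht)
  rw [h0]
  linarith

lemma psd_entry_zero {A : Matrix (Fin n) (Fin n) ℝ} (hA : A.PosSemidef) (i j : Fin n)
    (h : A i i = 0) : A i j = 0 := by
  rcases eq_or_ne j i with rfl | hij
  · exact h
  have hsymm : Aᵀ = A := by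
    have := hA.1; rwa [Matrix.IsHermitian, conjT_real] at this
  have hsym : A j i = A i j := by
    conv_lhs => rw [← hsymm, Matrix.transpose_apply]
  by_contra hne
  set t : ℝ := -(A j j + 1) / (2 * A i j) with ht
  have hq := hA.dotProduct_mulVec_nonneg (t • (Pi.single i 1 : Fin n → ℝ) + (Pi.single j 1 : Fin n → ℝ))
  have hexp : dotProduct
        (star (t • (Pi.single i 1 : Fin n → ℝ) + (Pi.single j 1 : Fin n → ℝ)))
        (A *ᵥ (t • (Pi.single i 1 : Fin n → ℝ) + (Pi.single j 1 : Fin n → ℝ)))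
      = t * t * A i i + t * A i j + t * A j i + A j j := by
    rw [Matrix.mulVec_add, Matrix.mulVec_smul]
    simp only [star_trivial, dotProduct_add, add_dotProduct,
      smul_dotProduct, dotProduct_smul]
    rw [Matrix.mulVec_single, Matrix.mulVec_single]
    simp only [mul_one, single_dotProduct, dotProduct_single]
    simp only [smul_eq_mul, Pi.smul_apply, single_dotProduct, Matrix.col_apply,
      MulOpposite.op_one, one_smul]
    ring_nf
  have hta : t * A i j = -(A j j + 1) / 2 := by
    rw [ht]
    field_simp
  rw [hexp, h, hsym] at hq
  nlinarith [hq, hta]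

lemma exists_sim_diag (mu : Fin n → ℝ) (mu0 : ℝ)
    (A : Matrix (Fin n) (Fin n) ℝ) (hA : A.PosSemidef)
    (hzero : ∀ i j, mu i ≠ mu0 ∨ mu j ≠ mu0 → A i j = 0) :
    ∃ U : Matrix (Fin n) (Fin n) ℝ, ∃ σ : Fin n → ℝ,
      U * Uᵀ = 1 ∧ U * A * Uᵀ = Matrix.diagonal σ ∧
      U * Matrix.diagonal mu * Uᵀ = Matrix.diagonal mu ∧
      (∀ i, 0 ≤ σ i) ∧ (∀ i, mu i ≠ mu0 → σ i = 0) := by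
  classical
  set pr : Fin n → Prop := fun i => mu i = mu0 with hpr
  set e : {i // pr i} ⊕ {i // ¬ pr i} ≃ Fin n := Equiv.sumCompl pr with he
  set B : Matrix {i // pr i} {i // pr i} ℝ := A.submatrix Subtype.val Subtype.val with hBdef
  have hBpsd : B.PosSemidef := hA.submatrix _
  have hB : B.IsHermitian := hBpsd.1
  set Q : Matrix {i // pr i} {i // pr i} ℝ := (Matrix.IsHermitian.eigenvectorUnitary hB :
    Matrix {i // pr i} {i // pr i} ℝ) with hQdef
  have hQ1 : Q * Qᵀ = 1 := by
    have := (Matrix.mem_unitaryGroup_iff).mp (Matrix.IsHermitian.eigenvectorUnitary hB).2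
    rwa [Matrix.star_eq_conjTranspose, conjT_real] at this
  have hQ1' : Qᵀ * Q = 1 := mul_eq_one_comm.mp hQ1
  set ev : {i // pr i} → ℝ := hB.eigenvalues with hev
  have hspec : B = Q * Matrix.diagonal ev * Qᵀ := by
    have := hB.spectral_theorem
    rw [Unitary.conjStarAlgAut_apply] at this
    rwa [Matrix.star_eq_conjTranspose, conjT_real, RCLike.ofReal_real_eq_id,
      Function.id_comp] at this
  -- the big orthogonal matrix
  set U' : Matrix ({i // pr i} ⊕ {i // ¬ pr i}) ({i // pr i} ⊕ {i // ¬ pr i}) ℝ :=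
    Matrix.fromBlocks Qᵀ 0 0 1 with hU'
  set U : Matrix (Fin n) (Fin n) ℝ := U'.submatrix e.symm e.symm with hU
  set σ : Fin n → ℝ := fun i => Sum.elim ev (fun _ => 0) (e.symm i) with hσ
  have hre : ∀ X Y : Matrix ({i // pr i} ⊕ {i // ¬ pr i}) ({i // pr i} ⊕ {i // ¬ pr i}) ℝ,
      X.submatrix e.symm e.symm * Y.submatrix e.symm e.symm = (X * Y).submatrix e.symm e.symm :=
    fun X Y => Matrix.submatrix_mul_equiv X Y _ e.symm _
  have hA' : A = (Matrix.fromBlocks B 0 0 0).submatrix e.symm e.symm := by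
    ext i j
    rw [Matrix.submatrix_apply]
    by_cases hi : pr i
    · by_cases hj : pr j
      · rw [Equiv.sumCompl_symm_apply_of_pos (p := pr) hi, Equiv.sumCompl_symm_apply_of_pos (p := pr) hj]
        rfl
      · rw [Equiv.sumCompl_symm_apply_of_pos (p := pr) hi, Equiv.sumCompl_symm_apply_of_neg (p := pr) hj]
        exact hzero i j (Or.inr hj)
    · rw [Equiv.sumCompl_symm_apply_of_neg (p := pr) hi]
      cases he' : e.symm j <;> exact hzero i j (Or.inl hi)
  have hdmu : Matrix.diagonal mu
      = (Matrix.diagonal (mu ∘ e)).submatrix e.symm e.symm := by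
    rw [Matrix.submatrix_diagonal_equiv]
    have hcc : (mu ∘ ⇑e) ∘ ⇑e.symm = mu := by
      funext i; simp
    rw [hcc]
  have hUT : Uᵀ = (U'ᵀ).submatrix e.symm e.symm := by
    rw [hU, Matrix.transpose_submatrix]
  have hU1 : U * Uᵀ = 1 := by
    rw [hU, hUT, hre, hU', Matrix.fromBlocks_transpose, Matrix.fromBlocks_multiply]
    simp only [Matrix.transpose_transpose, Matrix.transpose_zero, Matrix.transpose_one,
      Matrix.mul_zero, Matrix.zero_mul, Matrix.mul_one, add_zero, zero_add, hQ1']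
    rw [Matrix.fromBlocks_one, Matrix.submatrix_one_equiv]
  refine ⟨U, σ, hU1, ?_, ?_, ?_, ?_⟩
  · -- U * A * Uᵀ = diagonal σ
    rw [hA', hU, hUT, hre, hre, hU']
    rw [Matrix.fromBlocks_transpose, Matrix.fromBlocks_multiply, Matrix.fromBlocks_multiply]
    simp only [Matrix.transpose_transpose, Matrix.transpose_zero, Matrix.transpose_one,
      Matrix.mul_zero, Matrix.zero_mul, Matrix.mul_one, Matrix.one_mul, add_zero, zero_add]
    have hQBQ : Qᵀ * B * Q = Matrix.diagonal ev := by
      rw [hspec]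
      have h1 : Qᵀ * (Q * Matrix.diagonal ev * Qᵀ) * Q
          = (Qᵀ * Q) * Matrix.diagonal ev * (Qᵀ * Q) := by
        simp only [Matrix.mul_assoc]
      rw [h1, hQ1', Matrix.one_mul, Matrix.mul_one]
    rw [hQBQ]
    have : (Matrix.fromBlocks (Matrix.diagonal ev) 0 0 (0 : Matrix {i // ¬ pr i} {i // ¬ pr i} ℝ))
        = Matrix.diagonal (Sum.elim ev (fun _ => 0)) := by
      rw [← Matrix.diagonal_zero, Matrix.fromBlocks_diagonal]
    rw [this, Matrix.submatrix_diagonal_equiv]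
    rfl
  · -- U * diagonal mu * Uᵀ = diagonal mu
    conv_lhs => rw [hdmu]
    rw [hU, hUT, hre, hre, hU']
    have hcomp : (mu ∘ e) = Sum.elim (fun _ : {i // pr i} => mu0) (fun t : {i // ¬ pr i} => mu t) := by
      funext x
      cases x with
      | inl s => simp [he, Equiv.sumCompl_apply_inl]; exact s.2
      | inr t => simp [he, Equiv.sumCompl_apply_inr]
    rw [hcomp, ← Matrix.fromBlocks_diagonal, Matrix.fromBlocks_transpose,
      Matrix.fromBlocks_multiply, Matrix.fromBlocks_multiply]
    simp only [Matrix.transpose_transpose, Matrix.transpose_zero, Matrix.transpose_one,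
      Matrix.mul_zero, Matrix.zero_mul, Matrix.mul_one, Matrix.one_mul, add_zero, zero_add]
    have hconst : Matrix.diagonal (fun _ : {i // pr i} => mu0) = mu0 • (1 : Matrix _ _ ℝ) := by
      ext i j
      rcases eq_or_ne i j with rfl | hij
      · simp
      · simp [Matrix.diagonal_apply_ne _ hij, Matrix.one_apply_ne hij]
    have : Qᵀ * Matrix.diagonal (fun _ : {i // pr i} => mu0) * Q
        = Matrix.diagonal (fun _ : {i // pr i} => mu0) := by
      rw [hconst, Matrix.mul_smul, Matrix.mul_one, Matrix.smul_mul, hQ1']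
    rw [this, Matrix.fromBlocks_diagonal, Matrix.submatrix_diagonal_equiv, ← hcomp]
    have hcc2 : (mu ∘ ⇑e) ∘ ⇑e.symm = mu := by funext i; simp
    rw [hcc2]
  · intro i
    have hsi : σ i = Sum.elim ev (fun _ => 0) (e.symm i) := rfl
    rw [hsi]
    cases hx : e.symm i with
    | inl s => rw [Sum.elim_inl]; exact hBpsd.eigenvalues_nonneg s
    | inr t => rw [Sum.elim_inr]
  · intro i hi
    have hsi : σ i = Sum.elim ev (fun _ => 0) (e.symm i) := rfl
    rw [hsi, Equiv.sumCompl_symm_apply_of_neg (p := pr) hi, Sum.elim_inr]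

lemma card_filter_ge (k : ℕ) (hk : k < n) :
    (Finset.univ.filter (fun i : Fin n => k ≤ i.val)).card = n - k := by
  have h : Finset.univ.filter (fun i : Fin n => k ≤ i.val) = Finset.Ici (⟨k, hk⟩ : Fin n) := by
    ext i
    simp [Finset.mem_Ici, Fin.le_def]
  rw [h, Fin.card_Ici]

lemma exists_theta (lam : Fin n → ℝ) (hn : 0 < n) {c : ℝ} (hc : 0 < c) :
    ∃ θ : ℝ, ∑ i, max (lam i - θ) 0 = c := by
  have hne : (Finset.univ : Finset (Fin n)).Nonempty := by
    haveI := Fin.pos_iff_nonempty.mp hn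
    exact Finset.univ_nonempty
  set b := Finset.univ.sup' hne lam with hb
  have hcont : Continuous fun θ : ℝ => ∑ i, max (lam i - θ) 0 := by
    apply continuous_finset_sum
    intro i _
    exact (continuous_const.sub continuous_id).max continuous_const
  have hfb : ∑ i, max (lam i - b) 0 = 0 := by
    apply Finset.sum_eq_zero
    intro i _
    have := Finset.le_sup' lam (Finset.mem_univ i)
    exact max_eq_right (by linarith)
  obtain ⟨i0, _, hi0⟩ := Finset.exists_mem_eq_sup' hne lam
  have hfa : c ≤ ∑ i, max (lam i - (b - c)) 0 := by
    have h1 : max (lam i0 - (b - c)) 0 = c := by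
      have hb0 : lam i0 = b := hi0.symm
      rw [hb0, show b - (b - c) = c from by ring]
      exact max_eq_left hc.le
    calc c = max (lam i0 - (b - c)) 0 := h1.symm
      _ ≤ ∑ i, max (lam i - (b - c)) 0 :=
        Finset.single_le_sum (f := fun i => max (lam i - (b - c)) 0)
          (fun i _ => le_max_right _ _) (Finset.mem_univ i0)
  have hIVT := intermediate_value_Icc' (by linarith : b - c ≤ b) hcont.continuousOn
  have hmem : c ∈ Set.Icc ((fun θ : ℝ => ∑ i, max (lam i - θ) 0) b)
      ((fun θ : ℝ => ∑ i, max (lam i - θ) 0) (b - c)) := by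
    constructor
    · simpa [hfb] using hc.le
    · simpa using hfa
  obtain ⟨θ, _, hθ⟩ := hIVT hmem
  exact ⟨θ, hθ⟩
end Aux

/-- μ_{n-r} = μ_n iff for every ζ > 0 the projection of
X* − β⁻¹∇f(X*) onto (1+ζ)S_n has rank larger than r. -/
theorem stmt7 (n r : ℕ) (hr : 1 ≤ r) (hrn : r < n) (β : ℝ) (hβ : 0 < β)
    (f : Matrix (Fin n) (Fin n) ℝ → ℝ)
    (g : Matrix (Fin n) (Fin n) ℝ → Matrix (Fin n) (Fin n) ℝ)
    (hconv : ConvexOn ℝ Set.univ f) (hgrad : IsGradient f g)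
    (hsmooth : ∀ X Y, frobNorm (g X - g Y) ≤ β * frobNorm (X - Y))
    (Xstar : Matrix (Fin n) (Fin n) ℝ)
    (hmin : IsMinimizerOn f (spectrahedron n) Xstar)
    (hrank : Xstar.rank = r)
    (mu : Fin n → ℝ) (w : Fin n → Fin n → ℝ)
    (hmu : IsEigenDecomp (g Xstar) mu w) :
    mu ⟨n - r - 1, by omega⟩ = mu ⟨n - 1, by omega⟩ ↔
      ∀ ζ : ℝ, 0 < ζ → ∀ P : Matrix (Fin n) (Fin n) ℝ,
        IsProjOn (scaledSpectrahedron n (1 + ζ)) (Xstar - β⁻¹ • g Xstar) P →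
        r < P.rank := by
  classical
  obtain ⟨hmuAnti, horth, hdecomp⟩ := hmu
  have hn : 0 < n := lt_of_le_of_lt (Nat.zero_le r) hrn
  set muMin : ℝ := mu ⟨n - 1, by omega⟩ with hmuMin
  have hmono : ∀ i : Fin n, muMin ≤ mu i := by
    intro i
    have hi := i.isLt
    exact hmuAnti (Fin.le_def.mpr (by simp; omega))
  have hinv : (0:ℝ) < β⁻¹ := inv_pos.mpr hβ
  -- the orthonormal basis matrix from the eigendecomposition of the gradient
  set W : Matrix (Fin n) (Fin n) ℝ := Matrix.of (fun i k => w i k) with hWdef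
  have hW : W * Wᵀ = 1 := by
    ext i j
    rw [Matrix.mul_apply, Matrix.one_apply]
    simpa [hWdef] using horth i j
  have hWt : Wᵀ * W = 1 := mul_eq_one_comm.mp hW
  have hGW : g Xstar = Wᵀ * Matrix.diagonal mu * W := by
    rw [hdecomp]
    ext k l
    rw [Matrix.sum_apply, Matrix.mul_apply]
    simp only [Matrix.smul_apply, Matrix.vecMulVec_apply, smul_eq_mul,
      Matrix.mul_diagonal, Matrix.transpose_apply]
    apply Finset.sum_congr rfl
    intro i _
    simp only [hWdef, Matrix.of_apply]
    ring
  have hXpsd : Xstar.PosSemidef := hmin.1.1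
  have hXtr : Xstar.trace = 1 := hmin.1.2
  have hXsym : Xstarᵀ = Xstar := by
    have := hXpsd.1; rwa [Matrix.IsHermitian, conjT_real] at this
  set A : Matrix (Fin n) (Fin n) ℝ := W * Xstar * Wᵀ with hAdef
  have hApsd : A.PosSemidef := by
    have := hXpsd.mul_mul_conjTranspose_same W
    rwa [conjT_real] at this
  have hAsym : Aᵀ = A := by
    have := hApsd.1; rwa [Matrix.IsHermitian, conjT_real] at this
  have hXA : Xstar = Wᵀ * A * W := by
    rw [hAdef]
    have h1 : Wᵀ * (W * Xstar * Wᵀ) * W = (Wᵀ * W) * Xstar * (Wᵀ * W) := by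
      simp only [Matrix.mul_assoc]
    rw [h1, hWt, Matrix.one_mul, Matrix.mul_one]
  -- first-order optimality
  have hop := first_order hgrad hmin
  set d0 : Fin n → ℝ := fun i => if i = (⟨n - 1, by omega⟩ : Fin n) then 1 else 0 with hd0
  have hd0sum : ∑ i, d0 i = 1 := by
    rw [hd0]; simp
  set Z0 : Matrix (Fin n) (Fin n) ℝ := Wᵀ * Matrix.diagonal d0 * W with hZ0
  have hZ0mem : Z0 ∈ spectrahedron n :=
    mem_spectra hW (fun i => by rw [hd0]; dsimp; split <;> norm_num) hd0sum
  have h1 := hop Z0 hZ0mem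
  rw [frobInner_sub_right, hGW] at h1
  have hIZ0 : frobInner (Wᵀ * Matrix.diagonal mu * W) Z0 = muMin := by
    rw [hZ0, frobInner_conj _ _ (conj_transpose_self W d0), conj_conj hW]
    simp only [Matrix.diagonal_apply_eq, hd0]
    rw [Finset.sum_congr rfl (fun i _ => by
      rw [show (mu i * if i = (⟨n - 1, by omega⟩ : Fin n) then (1:ℝ) else 0)
        = (if i = (⟨n - 1, by omega⟩ : Fin n) then mu i else 0) from by split <;> ring])]
    rw [Finset.sum_ite_eq' Finset.univ _ mu]
    simp [hmuMin]
  have hIX : frobInner (Wᵀ * Matrix.diagonal mu * W) Xstar = ∑ i, mu i * A i i := by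
    rw [frobInner_conj _ _ hXsym]
  rw [hIZ0, hIX] at h1
  have hq0 : ∀ i, 0 ≤ A i i := fun i => conj_diag_nonneg hXpsd i
  have hqsum : ∑ i, A i i = 1 := by
    have h2 : ∑ i, A i i = A.trace := rfl
    rw [h2, hAdef, trace_conj' hWt, hXtr]
  have hAdiag0 : ∀ i, mu i ≠ muMin → A i i = 0 := by
    have hsle : ∑ i, (mu i - muMin) * A i i ≤ 0 := by
      have hexp : ∑ i, (mu i - muMin) * A i i = (∑ i, mu i * A i i) - muMin := by
        have h3 : ∀ i ∈ (Finset.univ : Finset (Fin n)), (mu i - muMin) * A i i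
            = mu i * A i i - muMin * A i i := fun i _ => by ring
        rw [Finset.sum_congr rfl h3, Finset.sum_sub_distrib, ← Finset.mul_sum, hqsum, mul_one]
      rw [hexp]; linarith
    have hterm : ∀ i ∈ (Finset.univ : Finset (Fin n)), 0 ≤ (mu i - muMin) * A i i :=
      fun i _ => mul_nonneg (by linarith [hmono i]) (hq0 i)
    have hz : ∀ i ∈ (Finset.univ : Finset (Fin n)), (mu i - muMin) * A i i = 0 :=
      (Finset.sum_eq_zero_iff_of_nonneg hterm).mp
        (le_antisymm hsle (Finset.sum_nonneg hterm))
    intro i hi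
    have := hz i (Finset.mem_univ i)
    rcases mul_eq_zero.mp this with h | h
    · exact absurd (by linarith : mu i = muMin) hi
    · exact h
  have hzero : ∀ i j, mu i ≠ muMin ∨ mu j ≠ muMin → A i j = 0 := by
    intro i j hij
    rcases hij with h | h
    · exact psd_entry_zero hApsd i j (hAdiag0 i h)
    · have h2 := psd_entry_zero hApsd j i (hAdiag0 j h)
      calc A i j = Aᵀ j i := rfl
        _ = A j i := by rw [hAsym]
        _ = 0 := h2
  obtain ⟨U, σ, hU1, hUAU, hUdU, hσ0, hσmu⟩ := exists_sim_diag mu muMin A hApsd hzero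
  have hUtU : Uᵀ * U = 1 := mul_eq_one_comm.mp hU1
  set V : Matrix (Fin n) (Fin n) ℝ := U * W with hVdef
  have hVV : V * Vᵀ = 1 := by
    rw [hVdef, Matrix.transpose_mul]
    have h2 : U * W * (Wᵀ * Uᵀ) = U * (W * Wᵀ) * Uᵀ := by simp only [Matrix.mul_assoc]
    rw [h2, hW, Matrix.mul_one, hU1]
  have hconjU : ∀ D : Matrix (Fin n) (Fin n) ℝ, Uᵀ * (U * D * Uᵀ) * U = D := by
    intro D
    have h2 : Uᵀ * (U * D * Uᵀ) * U = (Uᵀ * U) * D * (Uᵀ * U) := by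
      simp only [Matrix.mul_assoc]
    rw [h2, hUtU, Matrix.one_mul, Matrix.mul_one]
  have hXV : Xstar = Vᵀ * Matrix.diagonal σ * V := by
    rw [hVdef, Matrix.transpose_mul]
    have h2 : Wᵀ * Uᵀ * Matrix.diagonal σ * (U * W)
        = Wᵀ * (Uᵀ * Matrix.diagonal σ * U) * W := by simp only [Matrix.mul_assoc]
    rw [h2, ← hUAU, hconjU, ← hXA]
  have hGV : g Xstar = Vᵀ * Matrix.diagonal mu * V := by
    rw [hVdef, Matrix.transpose_mul]
    have h2 : Wᵀ * Uᵀ * Matrix.diagonal mu * (U * W)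
        = Wᵀ * (Uᵀ * Matrix.diagonal mu * U) * W := by simp only [Matrix.mul_assoc]
    rw [h2]
    conv_lhs => rw [hGW]
    congr 1
    conv_rhs => rw [← hUdU, hconjU]
  have hσsum : ∑ i, σ i = 1 := by
    rw [← trace_conj hVV σ, ← hXV, hXtr]
  have hσcard : Fintype.card {i // σ i ≠ 0} = r := by
    rw [← rank_conj hVV σ, ← hXV, hrank]
  set lam : Fin n → ℝ := fun i => σ i - β⁻¹ * mu i with hlam
  have hM : Xstar - β⁻¹ • g Xstar = Vᵀ * Matrix.diagonal lam * V := by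
    rw [hGV, hXV, ← Matrix.smul_mul, ← Matrix.mul_smul, ← Matrix.sub_mul, ← Matrix.mul_sub,
      ← Matrix.diagonal_smul, ← Matrix.diagonal_sub]
    congr 2
  constructor
  · -- forward: degenerate eigenvalue ⇒ projection rank always > r
    intro hEq ζ hζ P hP
    have hc : (0:ℝ) < 1 + ζ := by linarith
    obtain ⟨θ, hθ⟩ := exists_theta lam hn hc
    obtain ⟨hP0, huniq⟩ := proj_main hVV lam θ (1 + ζ) hc hθ
    rw [hM] at hP
    have hPeq := huniq P hP
    by_contra hle
    push_neg at hle
    rw [hPeq, rank_conj hVV] at hle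
    -- Step 1 : θ ≥ -β⁻¹ * muMin
    have hθge : -β⁻¹ * muMin ≤ θ := by
      by_contra hlt
      push_neg at hlt
      have hsub : Finset.univ.filter (fun i : Fin n => n - r - 1 ≤ i.val)
          ⊆ Finset.univ.filter (fun i : Fin n => max (lam i - θ) 0 ≠ 0) := by
        intro i hi
        simp only [Finset.mem_filter, Finset.mem_univ, true_and] at hi ⊢
        have hmui : mu i = muMin := by
          have hge : mu i ≤ mu ⟨n - r - 1, by omega⟩ :=
            hmuAnti (Fin.le_def.mpr (by simpa using hi))
          rw [hEq] at hge
          exact le_antisymm hge (hmono i)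
        have hlampos : 0 < lam i - θ := by
          have hli : lam i = σ i - β⁻¹ * mu i := rfl
          rw [hli, hmui]
          have := hσ0 i
          nlinarith
        rw [max_eq_left hlampos.le]
        exact ne_of_gt hlampos
      have hcard1 : (Finset.univ.filter (fun i : Fin n => n - r - 1 ≤ i.val)).card = r + 1 := by
        rw [card_filter_ge (n - r - 1) (by omega)]; omega
      have hcard2 := Finset.card_le_card hsub
      rw [hcard1] at hcard2
      rw [Fintype.card_subtype] at hle
      omega
    -- Step 2 : total mass at most 1
    have hsle : ∑ i, max (lam i - θ) 0 ≤ ∑ i, σ i := by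
      apply Finset.sum_le_sum
      intro i _
      rcases le_or_gt (lam i - θ) 0 with h | h
      · rw [max_eq_right h]; exact hσ0 i
      · rw [max_eq_left h.le]
        have h2 : β⁻¹ * muMin ≤ β⁻¹ * mu i := mul_le_mul_of_nonneg_left (hmono i) hinv.le
        have hli : lam i = σ i - β⁻¹ * mu i := rfl
        rw [hli]
        linarith
    rw [hθ, hσsum] at hsle
    linarith
  · -- backward: contrapositive, construct a projection of rank exactly r
    intro hAll
    by_contra hne
    have hgt : muMin < mu ⟨n - r - 1, by omega⟩ := by
      have hge : muMin ≤ mu ⟨n - r - 1, by omega⟩ := hmono _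
      rcases lt_or_eq_of_le hge with h | h
      · exact h
      · exact absurd h.symm hne
    set δ : ℝ := β⁻¹ * (mu ⟨n - r - 1, by omega⟩ - muMin) with hδ
    have hδpos : 0 < δ := mul_pos hinv (by linarith)
    set ζ : ℝ := r * (δ / 2) with hζ
    have hζpos : 0 < ζ := by
      apply mul_pos _ (by linarith)
      exact_mod_cast Nat.cast_pos.mpr (by omega : 0 < r)
    set θ : ℝ := -β⁻¹ * muMin - δ / 2 with hθdef
    have hsupp : ∀ i : Fin n, σ i ≠ 0 → mu i = muMin := by
      intro i hi
      by_contra h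
      exact hi (hσmu i h)
    have hfin1 : Finset.univ.filter (fun i : Fin n => σ i ≠ 0)
        ⊆ Finset.univ.filter (fun i : Fin n => n - r ≤ i.val) := by
      intro i hi
      simp only [Finset.mem_filter, Finset.mem_univ, true_and] at hi ⊢
      by_contra hlt
      push_neg at hlt
      have hle' : i ≤ (⟨n - r - 1, by omega⟩ : Fin n) := Fin.le_def.mpr (by simp; omega)
      have h2 := hmuAnti hle'
      have h3 := hsupp i hi
      rw [h3] at h2
      linarith
    have hcards : (Finset.univ.filter (fun i : Fin n => σ i ≠ 0)).card = r := by
      rw [← Fintype.card_subtype]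
      exact hσcard
    have hcardt : (Finset.univ.filter (fun i : Fin n => n - r ≤ i.val)).card = r := by
      rw [card_filter_ge (n - r) (by omega)]; omega
    have hsetseq : Finset.univ.filter (fun i : Fin n => σ i ≠ 0)
        = Finset.univ.filter (fun i : Fin n => n - r ≤ i.val) :=
      Finset.eq_of_subset_of_card_le hfin1 (by rw [hcards, hcardt])
    have hzero_small : ∀ i : Fin n, σ i = 0 → i.val < n - r := by
      intro i hi
      by_contra hge
      push_neg at hge
      have h2 : i ∈ Finset.univ.filter (fun i : Fin n => n - r ≤ i.val) := by
        simp only [Finset.mem_filter, Finset.mem_univ, true_and]; exact hge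
      rw [← hsetseq] at h2
      simp only [Finset.mem_filter, Finset.mem_univ, true_and] at h2
      exact h2 hi
    have hpeq : ∀ i, σ i ≠ 0 → max (lam i - θ) 0 = σ i + δ / 2 := by
      intro i hi
      have hmui := hsupp i hi
      have hlt : lam i - θ = σ i + δ / 2 := by
        have hli : lam i = σ i - β⁻¹ * mu i := rfl
        rw [hli, hmui, hθdef]
        ring
      rw [hlt]
      exact max_eq_left (by linarith [hσ0 i])
    have hpzero : ∀ i, σ i = 0 → max (lam i - θ) 0 = 0 := by
      intro i hi
      have hival := hzero_small i hi
      have hle' : i ≤ (⟨n - r - 1, by omega⟩ : Fin n) := Fin.le_def.mpr (by simp; omega)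
      have hmuge : mu ⟨n - r - 1, by omega⟩ ≤ mu i := hmuAnti hle'
      apply max_eq_right
      have hli : lam i = σ i - β⁻¹ * mu i := rfl
      rw [hli, hi, hθdef]
      have h2 : β⁻¹ * mu ⟨n - r - 1, by omega⟩ ≤ β⁻¹ * mu i :=
        mul_le_mul_of_nonneg_left hmuge hinv.le
      have h3 : δ ≤ β⁻¹ * mu i - β⁻¹ * muMin := by
        rw [hδ, mul_sub]; linarith
      linarith
    have hsump : ∑ i, max (lam i - θ) 0 = 1 + ζ := by
      have hstep : ∑ i, max (lam i - θ) 0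
          = ∑ i ∈ Finset.univ.filter (fun i : Fin n => σ i ≠ 0), max (lam i - θ) 0 := by
        symm
        apply Finset.sum_filter_of_ne
        intro i _ hpi
        by_contra hσi
        exact hpi (hpzero i hσi)
      rw [hstep, Finset.sum_congr rfl (fun i hi => hpeq i (by
        simpa only [Finset.mem_filter, Finset.mem_univ, true_and] using hi))]
      rw [Finset.sum_add_distrib, Finset.sum_const, hcards]
      have hσfull : ∑ i ∈ Finset.univ.filter (fun i : Fin n => σ i ≠ 0), σ i = 1 := by
        rw [Finset.sum_filter_ne_zero, hσsum]
      rw [hσfull, nsmul_eq_mul, hζ]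
    have hc2 : (0:ℝ) < 1 + ζ := by linarith
    obtain ⟨hP0, _⟩ := proj_main hVV lam θ (1 + ζ) hc2 hsump
    rw [← hM] at hP0
    have hlt := hAll ζ hζpos _ hP0
    rw [rank_conj hVV] at hlt
    have hcount : Fintype.card {i // max (lam i - θ) 0 ≠ 0} = r := by
      rw [Fintype.card_subtype]
      have hsets : Finset.univ.filter (fun i : Fin n => max (lam i - θ) 0 ≠ 0)
          = Finset.univ.filter (fun i : Fin n => σ i ≠ 0) := by
        ext i
        simp only [Finset.mem_filter, Finset.mem_univ, true_and]
        constructor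
        · intro hpi
          by_contra hσi
          exact hpi (hpzero i hσi)
        · intro hσi
          rw [hpeq i hσi]
          have := hσ0 i
          intro hcontra
          nlinarith
      rw [hsets, hcards]
    omega

end LRSGD
end
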